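/- Let p be a positive integer and (N, I) a p-system. Let S = {s_1, s_2, ..., s_t} and T be two independent sets such that S is a base of S ∪ T (i.e., S is an inclusion-wise maximal independent subset of S ∪ T). Then there exists a partition T_1, T_2, ..., T_t of T such that |T_i| ≤ p for every i ∈ {1,...,t}, and {s_1, s_2, ..., s_{i-1}, u} ∈ I for every i ∈ {1,...,t} and every u ∈ T_i. -/

import Mathlib

/-- Let `p` be a positive integer and `(N, I)` a `p`-system
(`I` nonempty and down-closed, and for every `X`, the sizes of any two
inclusion-wise maximal independent subsets of `X` are within a factor of `p`).
Let `S = {s 0, …, s (t-1)}` and `T` be independent, with `S` a base of `S ∪ T`.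
Then `T` can be partitioned into `t` parts `Tpart i`, each of size at most `p`,
pairwise disjoint with union `T`, such that `{s 0, …, s (i-1)} ∪ {u} ∈ I`
for every `i` and every `u ∈ Tpart i`. -/
theorem statement0 {α : Type*} [DecidableEq α] (p : ℕ) (hp : 0 < p)
    (I : Finset α → Prop)
    (hne : ∃ A, I A)
    (hdown : ∀ A B : Finset α, A ⊆ B → I B → I A)
    (hpsys : ∀ X B₁ B₂ : Finset α,
      B₁ ⊆ X → I B₁ → (∀ C, C ⊆ X → I C → B₁ ⊆ C → C = B₁) →
      B₂ ⊆ X → I B₂ → (∀ C, C ⊆ X → I C → B₂ ⊆ C → C = B₂) →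
      B₁.card ≤ p * B₂.card)
    (t : ℕ) (s : Fin t → α) (hs_inj : Function.Injective s)
    (S T : Finset α) (hS : S = Finset.image s Finset.univ)
    (hSI : I S) (hTI : I T)
    (hbase : ∀ C, C ⊆ S ∪ T → I C → S ⊆ C → C = S) :
    ∃ Tpart : Fin t → Finset α,
      (∀ i, (Tpart i).card ≤ p) ∧
      (∀ i j, i ≠ j → Disjoint (Tpart i) (Tpart j)) ∧
      Finset.univ.biUnion Tpart = T ∧
      ∀ i : Fin t, ∀ u ∈ Tpart i,
        I (insert u (Finset.image s (Finset.univ.filter (fun j : Fin t => j < i)))) := by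
  classical
  -- prefix sets
  set Sk : ℕ → Finset α := fun k =>
    Finset.image s (Finset.univ.filter (fun j : Fin t => (j : ℕ) < k)) with hSk
  have hSkmono : ∀ {k k' : ℕ}, k ≤ k' → Sk k ⊆ Sk k' := by
    intro k k' hkk'
    exact Finset.image_subset_image
      (Finset.monotone_filter_right _ (fun j _ hj => lt_of_lt_of_le hj hkk'))
  have hSkS : ∀ k, Sk k ⊆ S := by
    intro k
    rw [hS]
    exact Finset.image_subset_image (Finset.filter_subset _ _)
  have hSkcard : ∀ i ≤ t, (Sk i).card = i := by
    intro i hi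
    have himg : Finset.image Fin.val
        (Finset.univ.filter (fun j : Fin t => (j : ℕ) < i)) = Finset.range i := by
      ext a
      simp only [Finset.mem_image, Finset.mem_filter, Finset.mem_univ, true_and,
        Finset.mem_range]
      constructor
      · rintro ⟨j, hj, rfl⟩; exact hj
      · intro ha; exact ⟨⟨a, lt_of_lt_of_le ha hi⟩, ha, rfl⟩
    calc (Sk i).card
        = (Finset.univ.filter (fun j : Fin t => (j : ℕ) < i)).card :=
          Finset.card_image_of_injective _ hs_inj
      _ = (Finset.image Fin.val
            (Finset.univ.filter (fun j : Fin t => (j : ℕ) < i))).card :=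
          (Finset.card_image_of_injective _ Fin.val_injective).symm
      _ = i := by rw [himg, Finset.card_range]
  -- the level function
  set f : α → ℕ := fun u => Nat.findGreatest (fun k => I (insert u (Sk k))) (t - 1) with hf
  have hf_le : ∀ u, f u ≤ t - 1 := fun u => Nat.findGreatest_le _
  have hfspec : ∀ u ∈ T, I (insert u (Sk (f u))) := by
    intro u hu
    have h0 : I (insert u (Sk 0)) := by
      have hSk0 : Sk 0 = ∅ := by
        rw [hSk]
        simp
      rw [hSk0]
      exact hdown _ T (by simp [hu]) hTI
    exact Nat.findGreatest_spec (P := fun k => I (insert u (Sk k))) (Nat.zero_le _) h0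
  -- extension to a base
  have exists_base : ∀ X C : Finset α, C ⊆ X → I C →
      ∃ B, C ⊆ B ∧ B ⊆ X ∧ I B ∧ ∀ C', C' ⊆ X → I C' → B ⊆ C' → C' = B := by
    intro X C hCX hCI
    have hne' : (X.powerset.filter (fun B => C ⊆ B ∧ I B)).Nonempty :=
      ⟨C, by simp [Finset.mem_powerset, hCX, hCI]⟩
    obtain ⟨B, hBmem, hBmax⟩ := Finset.exists_max_image _ Finset.card hne'
    simp only [Finset.mem_filter, Finset.mem_powerset] at hBmem
    refine ⟨B, hBmem.2.1, hBmem.1, hBmem.2.2, ?_⟩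
    intro C' hC'X hC'I hBC'
    have hC'mem : C' ∈ X.powerset.filter (fun B => C ⊆ B ∧ I B) := by
      simp only [Finset.mem_filter, Finset.mem_powerset]
      exact ⟨hC'X, hBmem.2.1.trans hBC', hC'I⟩
    exact (Finset.eq_of_subset_of_card_le hBC' (hBmax C' hC'mem)).symm
  -- total size bound
  have hScard : S.card = t := by
    rw [hS, Finset.card_image_of_injective _ hs_inj, Finset.card_univ, Fintype.card_fin]
  have hT_card : T.card ≤ p * t := by
    obtain ⟨B, hTB, hBX, hBI, hBmax⟩ :=
      exists_base (S ∪ T) T Finset.subset_union_right hTI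
    calc T.card ≤ B.card := Finset.card_le_card hTB
      _ ≤ p * S.card := hpsys (S ∪ T) B S hBX hBI hBmax
          Finset.subset_union_left hSI hbase
      _ = p * t := by rw [hScard]
  -- counting lemma
  have hcount : ∀ i ≤ t, (T.filter fun u => f u < i).card ≤ p * i := by
    intro i hi
    rcases eq_or_lt_of_le hi with rfl | hlt
    · exact le_trans (Finset.card_le_card (Finset.filter_subset _ _)) hT_card
    · set D := T.filter fun u => f u < i with hD
      have hDI : I D := hdown _ T (Finset.filter_subset _ _) hTI
      set X := Sk i ∪ D with hX
      have hSkiI : I (Sk i) := hdown _ S (hSkS i) hSI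
      have hSkimax : ∀ C, C ⊆ X → I C → Sk i ⊆ C → C = Sk i := by
        intro C hCX hCI hSkC
        by_contra hne'
        obtain ⟨u, huC, huSk⟩ :=
          Finset.exists_of_ssubset (hSkC.ssubset_of_ne (Ne.symm hne'))
        have huD : u ∈ D := by
          rcases Finset.mem_union.mp (hCX huC) with h | h
          · exact absurd h huSk
          · exact h
        have hfu : f u < i := (Finset.mem_filter.mp huD).2
        have hnI : ¬ I (insert u (Sk i)) :=
          Nat.findGreatest_is_greatest hfu (by omega)
        exact hnI (hdown _ C (Finset.insert_subset huC hSkC) hCI)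
      obtain ⟨B, hDB, hBX, hBI, hBmax⟩ :=
        exists_base X D Finset.subset_union_right hDI
      calc D.card ≤ B.card := Finset.card_le_card hDB
        _ ≤ p * (Sk i).card := hpsys X B (Sk i) hBX hBI hBmax
            Finset.subset_union_left hSkiI hSkimax
        _ = p * i := by rw [hSkcard i hi]
  -- the sorted list
  set ls : List α := T.toList.mergeSort (fun a b => decide (f a ≤ f b)) with hls
  have hperm : ls.Perm T.toList := List.mergeSort_perm _ _
  have hnodup : ls.Nodup := hperm.nodup_iff.mpr T.nodup_toList
  have hmemls : ∀ {u : α}, u ∈ ls ↔ u ∈ T := by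
    intro u; rw [hperm.mem_iff, Finset.mem_toList]
  have hlen : ls.length = T.card := by rw [hperm.length_eq, Finset.length_toList]
  have hsorted : ∀ (a b : ℕ) (ha : a < ls.length) (hb : b < ls.length),
      a ≤ b → f ls[a] ≤ f ls[b] := by
    have hpw := List.pairwise_mergeSort (le := fun a b => decide (f a ≤ f b))
      (by intro a b c hab hbc; simp only [decide_eq_true_eq] at *; omega)
      (by intro a b; simp only [Bool.or_eq_true, decide_eq_true_eq]; omega)
      T.toList
    intro a b ha hb hab
    rcases eq_or_lt_of_le hab with rfl | h
    · exact le_refl _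
    · have := List.pairwise_iff_getElem.mp hpw a b ha hb h
      simpa using this
  -- division helper
  have hdivkey : ∀ {i j k k' : ℕ}, k < p → k' < p → p * i + k = p * j + k' → i = j := by
    intro i j k k' hk hk' heq
    have h1 : (p * i + k) / p = i := by
      rw [Nat.mul_add_div hp, Nat.div_eq_of_lt hk, Nat.add_zero]
    have h2 : (p * j + k') / p = j := by
      rw [Nat.mul_add_div hp, Nat.div_eq_of_lt hk', Nat.add_zero]
    rw [← h1, ← h2, heq]
  -- membership in a part
  have hmem_part : ∀ (i : Fin t) (u : α),
      u ∈ ((ls.drop (p * (i : ℕ))).take p).toFinset ↔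
      ∃ (k : ℕ), k < p ∧ ∃ (h2 : p * (i : ℕ) + k < ls.length), ls[p * (i : ℕ) + k] = u := by
    intro i u
    rw [List.mem_toFinset, List.mem_iff_getElem]
    constructor
    · rintro ⟨n, hn, rfl⟩
      have hn' : n < p ∧ p * (i : ℕ) + n < ls.length := by
        simp only [List.length_take, List.length_drop] at hn
        omega
      refine ⟨n, hn'.1, hn'.2, ?_⟩
      rw [show ((ls.drop (p * (i : ℕ))).take p)[n] = ls[p * (i : ℕ) + n] from by
        rw [List.getElem_take, List.getElem_drop]]
    · rintro ⟨k, h1, h2, rfl⟩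
      refine ⟨k, ?_, ?_⟩
      · simp only [List.length_take, List.length_drop]; omega
      · rw [List.getElem_take, List.getElem_drop]
  refine ⟨fun i => ((ls.drop (p * (i : ℕ))).take p).toFinset, ?_, ?_, ?_, ?_⟩
  · -- card bound
    intro i
    calc ((ls.drop (p * (i : ℕ))).take p).toFinset.card
        ≤ ((ls.drop (p * (i : ℕ))).take p).length := List.toFinset_card_le _
      _ ≤ p := by simp [List.length_take]
  · -- disjointness
    intro i j hij
    rw [Finset.disjoint_left]
    intro u hui huj
    obtain ⟨k, hk, h2, heq⟩ := (hmem_part i u).mp hui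
    obtain ⟨k', hk', h2', heq'⟩ := (hmem_part j u).mp huj
    have : ls[p * (i : ℕ) + k] = ls[p * (j : ℕ) + k'] := by rw [heq, heq']
    have hidx : p * (i : ℕ) + k = p * (j : ℕ) + k' := (hnodup.getElem_inj_iff).mp this
    exact hij (Fin.ext (hdivkey hk hk' hidx))
  · -- union
    ext u
    simp only [Finset.mem_biUnion, Finset.mem_univ, true_and]
    constructor
    · rintro ⟨i, hi⟩
      obtain ⟨k, hk, h2, heq⟩ := (hmem_part i u).mp hi
      rw [← heq]
      exact hmemls.mp (List.getElem_mem _)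
    · intro hu
      obtain ⟨m, hm, heq⟩ := List.mem_iff_getElem.mp (hmemls.mpr hu)
      have hmlt : m < p * t := lt_of_lt_of_le (hlen ▸ hm) hT_card
      have hit : m / p < t := by
        rw [Nat.div_lt_iff_lt_mul hp, Nat.mul_comm]
        exact hmlt
      have hdm : p * (m / p) + m % p = m := Nat.div_add_mod m p
      have hb : p * ((⟨m / p, hit⟩ : Fin t) : ℕ) + m % p < ls.length := by
        show p * (m / p) + m % p < ls.length
        omega
      refine ⟨⟨m / p, hit⟩, (hmem_part _ u).mpr ⟨m % p, Nat.mod_lt _ hp, hb, ?_⟩⟩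
      have hgc : ls[p * ((⟨m / p, hit⟩ : Fin t) : ℕ) + m % p]'hb = ls[m]'hm := by
        congr 1
      rw [hgc]
      exact heq
  · -- independence
    intro i u hu
    obtain ⟨k, hk, h2, heq⟩ := (hmem_part i u).mp hu
    have huT : u ∈ T := by rw [← heq]; exact hmemls.mp (List.getElem_mem _)
    set m := p * (i : ℕ) + k with hm
    have hif : (i : ℕ) ≤ f u := by
      by_contra hcon
      push_neg at hcon
      have hmlt : m < ls.length := h2
      have hsub : (ls.take (m + 1)).toFinset ⊆ T.filter (fun v => f v < (i : ℕ)) := by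
        intro v hv
        rw [List.mem_toFinset, List.mem_iff_getElem] at hv
        obtain ⟨n, hn, rfl⟩ := hv
        have hn' : n < ls.length ∧ n ≤ m := by
          simp only [List.length_take] at hn
          omega
        rw [show (ls.take (m + 1))[n] = ls[n]'hn'.1 from List.getElem_take]
        refine Finset.mem_filter.mpr ⟨hmemls.mp (List.getElem_mem _), ?_⟩
        calc f (ls[n]'hn'.1) ≤ f (ls[m]'hmlt) := hsorted n m hn'.1 hmlt hn'.2
          _ = f u := by rw [heq]
          _ < (i : ℕ) := hcon
      have hcard : (ls.take (m + 1)).toFinset.card = m + 1 := by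
        rw [List.toFinset_card_of_nodup ((List.take_sublist _ _).nodup hnodup)]
        simp only [List.length_take]
        omega
      have hle : m + 1 ≤ (T.filter (fun v => f v < (i : ℕ))).card := by
        rw [← hcard]
        exact Finset.card_le_card hsub
      have := hcount (i : ℕ) (le_of_lt i.isLt)
      omega
    have hgoal : I (insert u (Sk (i : ℕ))) :=
      hdown _ (insert u (Sk (f u)))
        (Finset.insert_subset_insert _ (hSkmono hif)) (hfspec u huT)
    have hset : Finset.image s (Finset.univ.filter (fun j : Fin t => j < i)) = Sk (i : ℕ) := by
      rw [hSk]
      apply congrArg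
      apply Finset.filter_congr
      intro j _
      exact Iff.rfl
    rw [hset]
    exact hgoal
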